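/- Let p be a real number with |p| ≤ 2. Then there is no sequence z : ℤ → ℝ such that z(t) → 0 as |t| → ∞ and z(t−1) + p·z(t) + z(t+1) = δ(t) for all t ∈ ℤ. That is, the elementary symmetric filter [1,p,1] with |p| ≤ 2 has no inverse whose elements converge to zero. -/
import Mathlib


/-- For `|p| ≤ 2`, the elementary filter `[1,p,1]` has no inverse sequence tending to `0`
as `|t| → ∞`. -/
theorem no_decaying_inverse_of_abs_le_two (p : ℝ) (hp : |p| ≤ 2) :
    ¬ ∃ z : ℤ → ℝ,
        Filter.Tendsto z Filter.cofinite (nhds 0) ∧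
        ∀ t : ℤ, z (t - 1) + p * z t + z (t + 1) = if t = 0 then 1 else 0 := by
  rintro ⟨z, hz, hrec⟩
  have hp2 : p ^ 2 ≤ 4 := by nlinarith [abs_nonneg p, sq_abs p]
  set E : ℤ → ℝ := fun t => z t ^ 2 + z (t + 1) ^ 2 + p * z t * z (t + 1) with hE
  -- the energy is conserved away from 0
  have step : ∀ t : ℤ, t ≠ 0 → E t = E (t - 1) := by
    intro t ht
    have h := hrec t
    rw [if_neg ht] at h
    have : z (t - 1 + 1) = z t := by norm_num
    simp only [hE, this]
    linear_combination (z (t + 1) - z (t - 1)) * h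
  have hpos : ∀ n : ℕ, E n = E 0 := by
    intro n
    induction n with
    | zero => norm_num
    | succ k ih =>
        have h := step ((k : ℤ) + 1) (by positivity)
        push_cast
        simpa [add_sub_cancel_right, ih] using h
  have hneg : ∀ n : ℕ, E (-1 - n) = E (-1) := by
    intro n
    induction n with
    | zero => norm_num
    | succ k ih =>
        have h := step (-1 - (k : ℤ)) (by omega)
        have : (-1 : ℤ) - (k : ℤ) - 1 = -1 - ((k : ℤ) + 1) := by ring
        rw [this] at h
        push_cast
        rw [← h, ih]
  -- z composed with injective maps ℕ → ℤ tends to 0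
  have lim_of_inj : ∀ f : ℕ → ℤ, Function.Injective f →
      Filter.Tendsto (fun n => z (f n)) Filter.cofinite (nhds 0) := by
    intro f hf
    exact hz.comp hf.tendsto_cofinite
  have limE : ∀ f g : ℕ → ℤ, Function.Injective f → Function.Injective g →
      (∀ n, g n = f n + 1) →
      Filter.Tendsto (fun n => E (f n)) Filter.cofinite (nhds 0) := by
    intro f g hf hg hfg
    have h1 := lim_of_inj f hf
    have h2 := lim_of_inj g hg
    have : Filter.Tendsto
        (fun n => z (f n) ^ 2 + z (f n + 1) ^ 2 + p * z (f n) * z (f n + 1))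
        Filter.cofinite (nhds 0) := by
      have h2' : Filter.Tendsto (fun n => z (f n + 1)) Filter.cofinite (nhds 0) := by
        have := h2
        simp only [hfg] at this
        exact this
      have := ((h1.mul h1).add (h2'.mul h2')).add
        ((tendsto_const_nhds (x := p)).mul h1 |>.mul h2')
      simpa [sq] using this
    exact this
  -- E 0 = 0
  have hE0 : E 0 = 0 := by
    have hf : Function.Injective (fun n : ℕ => (n : ℤ)) := fun a b h => Nat.cast_injective h
    have hg : Function.Injective (fun n : ℕ => (n : ℤ) + 1) := fun a b h => by
      simpa using h
    have h := limE _ _ hf hg (fun n => rfl)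
    have hconst : (fun n : ℕ => E ((n : ℤ))) = fun _ => E 0 := funext fun n => hpos n
    rw [hconst] at h
    exact tendsto_nhds_unique tendsto_const_nhds h
  -- E (-1) = 0
  have hEm1 : E (-1) = 0 := by
    have hf : Function.Injective (fun n : ℕ => (-1 : ℤ) - n) := fun a b h => by
      simp only at h; omega
    have hg : Function.Injective (fun n : ℕ => (-1 : ℤ) - n + 1) := fun a b h => by
      simp only at h; omega
    have h := limE _ _ hf hg (fun n => rfl)
    have hconst : (fun n : ℕ => E ((-1 : ℤ) - n)) = fun _ => E (-1) :=
      funext fun n => hneg n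
    rw [hconst] at h
    exact tendsto_nhds_unique tendsto_const_nhds h
  -- final algebra
  have h0 := hrec 0
  rw [if_pos rfl] at h0
  simp only [hE] at hE0 hEm1
  norm_num at hE0 hEm1 h0
  set a := z (-1) with ha
  set b := z 0 with hb
  set c := z 1 with hc
  have hab : (-1 : ℤ) + 1 = 0 := by norm_num
  -- hEm1 : a^2 + b^2 + p*a*b = 0 ; hE0 : b^2 + c^2 + p*b*c = 0 ; h0 : a + p*b + c = 1
  nlinarith [sq_nonneg (2*a + p*b), sq_nonneg (2*c + p*b), sq_nonneg (a - c), sq_nonneg b,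
    mul_self_nonneg ((4 - p^2) * b)]
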